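/- For every θ ∈ (0,1) there exists c > 0 such that for every f : ℝⁿ → ℝ of class C^{1,θ} (bounded, with bounded derivative, whose derivative has finite θ-Hölder seminorm) one has ‖f‖_{C¹} ≤ c · ‖f‖_{C⁰}^{θ/(1+θ)} · ‖f‖_{C^{1,θ}}^{1/(1+θ)}, where ‖f‖_{C^{1,θ}} := ‖f‖_{C¹} + max_{|α|=1} [∂^α f]_θ. -/

import Mathlib

/-- Sup norm `‖f‖_∞ = ⨆ x, ‖f x‖`. -/
noncomputable def supNorm {E F : Type*} [NormedAddCommGroup F] (f : E → F) : ℝ :=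
  ⨆ x, ‖f x‖

/-- The θ-Hölder seminorm `[f]_θ = sup_{x ≠ y} ‖f x − f y‖ / |x−y|^θ`. -/
noncomputable def holderSemi {E F : Type*} [NormedAddCommGroup E] [NormedAddCommGroup F]
    (θ : ℝ) (f : E → F) : ℝ :=
  ⨆ p : {p : E × E // p.1 ≠ p.2}, ‖f p.1.1 - f p.1.2‖ / ‖p.1.1 - p.1.2‖ ^ θ

private lemma euclid_sum_abs_le {n : ℕ} (v : EuclideanSpace ℝ (Fin n)) :
    ∑ i, |v i| ≤ Real.sqrt n * ‖v‖ := by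
  have h1 : (∑ i, |v i|) ^ 2 ≤ (n : ℝ) * ∑ i, |v i| ^ 2 := by
    simpa using sq_sum_le_card_mul_sum_sq (s := Finset.univ) (f := fun i => |v i|)
  have h2 : ∑ i, |v i| ^ 2 = ‖v‖ ^ 2 := by
    rw [EuclideanSpace.norm_eq, Real.sq_sqrt (by positivity)]
    simp [sq_abs]
  have h3 : (0:ℝ) ≤ ∑ i, |v i| := Finset.sum_nonneg fun i _ => abs_nonneg _
  calc ∑ i, |v i| = Real.sqrt ((∑ i, |v i|)^2) := (Real.sqrt_sq h3).symm
    _ ≤ Real.sqrt ((n:ℝ) * ‖v‖^2) := Real.sqrt_le_sqrt (by rw [← h2]; exact h1)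
    _ = Real.sqrt n * ‖v‖ := by rw [Real.sqrt_mul (by positivity), Real.sqrt_sq (norm_nonneg _)]

private lemma opNorm_le_sqrt_mul {n : ℕ} (φ : EuclideanSpace ℝ (Fin n) →L[ℝ] ℝ) {C : ℝ}
    (hC : 0 ≤ C) (h : ∀ i, |φ (EuclideanSpace.single i 1)| ≤ C) :
    ‖φ‖ ≤ Real.sqrt n * C := by
  refine φ.opNorm_le_bound (by positivity) (fun v => ?_)
  have hv : ∑ i, v i • EuclideanSpace.single i (1:ℝ) = v := by
    simpa using (EuclideanSpace.basisFun (Fin n) ℝ).sum_repr v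
  have hφv : φ v = ∑ i, v i * φ (EuclideanSpace.single i 1) := by
    conv_lhs => rw [← hv]
    simp [map_sum, map_smul, smul_eq_mul]
  calc ‖φ v‖ = |∑ i, v i * φ (EuclideanSpace.single i 1)| := by rw [Real.norm_eq_abs, hφv]
    _ ≤ ∑ i, |v i * φ (EuclideanSpace.single i 1)| := Finset.abs_sum_le_sum_abs _ _
    _ ≤ ∑ i, |v i| * C := Finset.sum_le_sum fun i _ => by
        rw [abs_mul]; exact mul_le_mul_of_nonneg_left (h i) (abs_nonneg _)
    _ = (∑ i, |v i|) * C := by rw [Finset.sum_mul]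
    _ ≤ (Real.sqrt n * ‖v‖) * C :=
        mul_le_mul_of_nonneg_right (euclid_sum_abs_le v) hC
    _ = Real.sqrt n * C * ‖v‖ := by ring

set_option maxHeartbeats 1600000 in
theorem holder_interpolation_one (n : ℕ) (θ : ℝ) (hθ : θ ∈ Set.Ioo (0:ℝ) 1) :
    ∃ c : ℝ, 0 < c ∧ ∀ f : EuclideanSpace ℝ (Fin n) → ℝ,
      ContDiff ℝ 1 f →
      (∃ M : ℝ, ∀ x, |f x| ≤ M) →
      (∃ M : ℝ, ∀ x, ‖fderiv ℝ f x‖ ≤ M) →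
      (∃ M : ℝ, ∀ x y, ‖fderiv ℝ f x - fderiv ℝ f y‖ ≤ M * ‖x - y‖ ^ θ) →
      supNorm f + supNorm (fun x => fderiv ℝ f x) ≤
        c * supNorm f ^ (θ / (1 + θ)) *
          ((supNorm f + supNorm (fun x => fderiv ℝ f x)) +
            ⨆ i : Fin n,
              holderSemi θ (fun x => fderiv ℝ f x (EuclideanSpace.single i 1))) ^
            (1 / (1 + θ)) := by
  obtain ⟨hθ0, hθ1⟩ := hθ
  have h1θ : (0:ℝ) < 1 + θ := by linarith
  refine ⟨3 + Real.sqrt n, by positivity, ?_⟩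
  rintro f hf ⟨M0, hM0⟩ ⟨M1, hM1⟩ ⟨M2, hM2⟩
  have hdiff : Differentiable ℝ f := hf.differentiable one_ne_zero
  set A := supNorm f with hAdef
  set B := supNorm (fun x => fderiv ℝ f x) with hBdef
  set H := ⨆ i : Fin n,
      holderSemi θ (fun x => fderiv ℝ f x (EuclideanSpace.single i 1)) with hHdef
  -- basic facts
  have hAbdd : BddAbove (Set.range fun x => ‖f x‖) :=
    ⟨M0, by rintro _ ⟨x, rfl⟩; simpa [Real.norm_eq_abs] using hM0 x⟩
  have hfA : ∀ x, |f x| ≤ A := fun x => by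
    rw [← Real.norm_eq_abs]; exact le_ciSup hAbdd x
  have hA0 : 0 ≤ A := Real.iSup_nonneg fun x => norm_nonneg _
  have hBbdd : BddAbove (Set.range fun x => ‖fderiv ℝ f x‖) :=
    ⟨M1, by rintro _ ⟨x, rfl⟩; exact hM1 x⟩
  have hfB : ∀ x, ‖fderiv ℝ f x‖ ≤ B := fun x => le_ciSup hBbdd x
  have hB0 : 0 ≤ B := Real.iSup_nonneg fun x => norm_nonneg _
  have hH0 : 0 ≤ H := Real.iSup_nonneg fun i => Real.iSup_nonneg fun p => by positivity
  -- coordinate Hölder bound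
  have hcoord : ∀ (i : Fin n) x y,
      |fderiv ℝ f x (EuclideanSpace.single i 1) - fderiv ℝ f y (EuclideanSpace.single i 1)|
        ≤ H * ‖x - y‖ ^ θ := by
    intro i x y
    rcases eq_or_ne x y with rfl | hxy
    · simp [Real.zero_rpow (ne_of_gt hθ0)]
    · have hd : (0:ℝ) < ‖x - y‖ ^ θ :=
        Real.rpow_pos_of_pos (by simpa [sub_eq_zero] using norm_pos_iff.mpr (sub_ne_zero.mpr hxy)) _
      have hbound : ∀ u w : EuclideanSpace ℝ (Fin n),
          |fderiv ℝ f u (EuclideanSpace.single i 1) - fderiv ℝ f w (EuclideanSpace.single i 1)|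
            ≤ ‖fderiv ℝ f u - fderiv ℝ f w‖ := by
        intro u w
        have := (fderiv ℝ f u - fderiv ℝ f w).le_opNorm (EuclideanSpace.single i (1:ℝ))
        simpa [ContinuousLinearMap.sub_apply, Real.norm_eq_abs,
          EuclideanSpace.norm_single] using this
      have hbddrat : BddAbove (Set.range fun p :
          {p : EuclideanSpace ℝ (Fin n) × EuclideanSpace ℝ (Fin n) // p.1 ≠ p.2} =>
          ‖fderiv ℝ f p.1.1 (EuclideanSpace.single i 1)
            - fderiv ℝ f p.1.2 (EuclideanSpace.single i 1)‖ / ‖p.1.1 - p.1.2‖ ^ θ) := by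
        refine ⟨M2, ?_⟩
        rintro _ ⟨⟨⟨u, w⟩, huw⟩, rfl⟩
        have hdp : (0:ℝ) < ‖u - w‖ ^ θ :=
          Real.rpow_pos_of_pos (norm_pos_iff.mpr (sub_ne_zero.mpr huw)) _
        rw [div_le_iff₀ hdp]
        exact le_trans (by simpa [Real.norm_eq_abs] using hbound u w) (hM2 u w)
      have h1 : ‖fderiv ℝ f x (EuclideanSpace.single i 1)
            - fderiv ℝ f y (EuclideanSpace.single i 1)‖ / ‖x - y‖ ^ θ
          ≤ holderSemi θ (fun x => fderiv ℝ f x (EuclideanSpace.single i 1)) := by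
        exact le_ciSup hbddrat ⟨(x, y), hxy⟩
      have h2 : holderSemi θ (fun x => fderiv ℝ f x (EuclideanSpace.single i 1)) ≤ H :=
        le_ciSup (Set.Finite.bddAbove (Set.finite_range (fun j : Fin n =>
          holderSemi θ fun x => (fderiv ℝ f x) (EuclideanSpace.single j 1)))) i
      rw [← Real.norm_eq_abs]
      calc ‖fderiv ℝ f x (EuclideanSpace.single i 1)
            - fderiv ℝ f y (EuclideanSpace.single i 1)‖
          = (‖fderiv ℝ f x (EuclideanSpace.single i 1)
              - fderiv ℝ f y (EuclideanSpace.single i 1)‖ / ‖x - y‖ ^ θ) * ‖x - y‖ ^ θ := by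
            field_simp
        _ ≤ H * ‖x - y‖ ^ θ :=
            mul_le_mul_of_nonneg_right (le_trans h1 h2) (le_of_lt hd)
  -- operator-norm Hölder bound
  have hHol : ∀ x y, ‖fderiv ℝ f x - fderiv ℝ f y‖ ≤ Real.sqrt n * H * ‖x - y‖ ^ θ := by
    intro x y
    have := opNorm_le_sqrt_mul (fderiv ℝ f x - fderiv ℝ f y)
      (C := H * ‖x - y‖ ^ θ) (by positivity)
      (fun i => by simpa [ContinuousLinearMap.sub_apply] using hcoord i x y)
    linarith [this, le_of_eq (mul_assoc (Real.sqrt n) H (‖x - y‖ ^ θ))]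
  -- key estimate
  have key : ∀ (x : EuclideanSpace ℝ (Fin n)) (t : ℝ), 0 < t →
      ‖fderiv ℝ f x‖ ≤ 2 * A / t + Real.sqrt n * H * t ^ θ := by
    intro x t ht
    refine (fderiv ℝ f x).opNorm_le_bound (by positivity) (fun v => ?_)
    rcases eq_or_ne v 0 with rfl | hv
    · simp
    · have hvn : (0:ℝ) < ‖v‖ := norm_pos_iff.mpr hv
      set w := (t / ‖v‖) • v with hwdef
      have hwn : ‖w‖ = t := by
        rw [hwdef, norm_smul, Real.norm_eq_abs, abs_of_pos (div_pos ht hvn)]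
        field_simp
      -- the Taylor-type estimate at scale t
      have est : |fderiv ℝ f x w| ≤ 2 * A + Real.sqrt n * H * (t * t ^ θ) := by
        set g := fun y => f y - fderiv ℝ f x y with hgdef
        have hgd : ∀ y, HasFDerivAt g (fderiv ℝ f y - fderiv ℝ f x) y := fun y =>
          ((hdiff y).hasFDerivAt.sub (fderiv ℝ f x).hasFDerivAt)
        have hC : ∀ y ∈ Metric.closedBall x t,
            ‖fderiv ℝ g y‖ ≤ Real.sqrt n * H * t ^ θ := by
          intro y hy
          rw [(hgd y).fderiv]
          refine le_trans (hHol y x) ?_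
          have hyx : ‖y - x‖ ≤ t := by
            simpa [dist_eq_norm] using Metric.mem_closedBall.mp hy
          exact mul_le_mul_of_nonneg_left
            (Real.rpow_le_rpow (norm_nonneg _) hyx (le_of_lt hθ0)) (by positivity)
        have hmem : x + w ∈ Metric.closedBall x t := by
          simp [dist_eq_norm, hwn]
        have hmvt := (convex_closedBall x t).norm_image_sub_le_of_norm_fderiv_le
          (fun y _ => (hgd y).differentiableAt) hC
          (Metric.mem_closedBall_self (le_of_lt ht)) hmem
        have hgsub : g (x + w) - g x = f (x + w) - f x - fderiv ℝ f x w := by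
          simp only [hgdef, map_add]
          ring
        have h1 : ‖f (x + w) - f x - fderiv ℝ f x w‖ ≤ Real.sqrt n * H * t ^ θ * t := by
          rw [← hgsub]
          calc ‖g (x + w) - g x‖ ≤ Real.sqrt n * H * t ^ θ * ‖x + w - x‖ := hmvt
            _ = Real.sqrt n * H * t ^ θ * t := by rw [add_sub_cancel_left, hwn]
        have h2 : |fderiv ℝ f x w| ≤ |f (x + w)| + |f x| + ‖f (x + w) - f x - fderiv ℝ f x w‖ := by
          rw [Real.norm_eq_abs]
          have : fderiv ℝ f x w = f (x + w) - f x - (f (x + w) - f x - fderiv ℝ f x w) := by ring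
          calc |fderiv ℝ f x w|
              = |f (x + w) - f x - (f (x + w) - f x - fderiv ℝ f x w)| := by rw [← this]
            _ ≤ |f (x + w) - f x| + |f (x + w) - f x - fderiv ℝ f x w| := abs_sub _ _
            _ ≤ |f (x + w)| + |f x| + |f (x + w) - f x - fderiv ℝ f x w| := by
                have := abs_sub (f (x + w)) (f x)
                linarith
        have := hfA (x + w)
        have := hfA x
        nlinarith [h1, h2]
      -- rescale
      have hws : fderiv ℝ f x w = (t / ‖v‖) * fderiv ℝ f x v := by
        rw [hwdef, map_smul, smul_eq_mul]
      rw [Real.norm_eq_abs]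
      have habs : (t / ‖v‖) * |fderiv ℝ f x v| ≤ 2 * A + Real.sqrt n * H * (t * t ^ θ) := by
        calc (t / ‖v‖) * |fderiv ℝ f x v| = |fderiv ℝ f x w| := by
              rw [hws, abs_mul, abs_of_pos (div_pos ht hvn)]
          _ ≤ _ := est
      have h5 : |fderiv ℝ f x v| = (‖v‖ / t) * ((t / ‖v‖) * |fderiv ℝ f x v|) := by
        field_simp
      rw [h5]
      have h6 : (‖v‖ / t) * (2 * A + Real.sqrt n * H * (t * t ^ θ))
          = (2 * A / t + Real.sqrt n * H * t ^ θ) * ‖v‖ := by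
        field_simp
      rw [← h6]
      exact mul_le_mul_of_nonneg_left habs (by positivity)
  have hBle : ∀ t : ℝ, 0 < t → B ≤ 2 * A / t + Real.sqrt n * H * t ^ θ := fun t ht =>
    ciSup_le fun x => key x t ht
  -- conclude
  by_cases hA : A = 0
  · -- f ≡ 0
    have hf0 : f = fun _ => (0:ℝ) := funext fun x =>
      abs_eq_zero.mp (le_antisymm (hA ▸ hfA x) (abs_nonneg _))
    have hB0' : B = 0 := by
      rw [hBdef, supNorm]
      have : ∀ x : EuclideanSpace ℝ (Fin n), fderiv ℝ f x = 0 := by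
        intro x; rw [hf0]; exact fderiv_const_apply 0
      simp [this]
    rw [hA, hB0', Real.zero_rpow (by positivity)]
    simp
  · have hApos : 0 < A := lt_of_le_of_ne hA0 (Ne.symm hA)
    set K := A + B + H with hKdef
    have hAK : A ≤ K := by linarith
    have hKpos : 0 < K := lt_of_lt_of_le hApos hAK
    set p := 1 / (1 + θ) with hpdef
    set q := θ / (1 + θ) with hqdef
    have hppos : 0 < p := by positivity
    have hqpos : 0 < q := by positivity
    set t := (A / K) ^ p with htdef
    have htpos : 0 < t := Real.rpow_pos_of_pos (div_pos hApos hKpos) _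
    set D := A ^ q * K ^ p with hDdef
    have hD0 : 0 ≤ D := by positivity
    -- e1 : A / t = D
    have htt : t = A ^ p / K ^ p := by rw [htdef, Real.div_rpow hA0 (le_of_lt hKpos)]
    have hApne : A ^ p ≠ 0 := ne_of_gt (Real.rpow_pos_of_pos hApos _)
    have hKpne : K ^ p ≠ 0 := ne_of_gt (Real.rpow_pos_of_pos hKpos _)
    have hAq : A / A ^ p = A ^ q := by
      rw [hqdef, show θ / (1 + θ) = 1 - 1 / (1 + θ) by field_simp; ring,
        Real.rpow_sub hApos, Real.rpow_one, hpdef]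
    have e1 : A / t = D := by
      rw [htt, hDdef, ← hAq]
      field_simp
    -- e2 : K * t ^ θ = D
    have htθ : t ^ θ = A ^ q / K ^ q := by
      rw [htdef, ← Real.rpow_mul (div_nonneg hA0 (le_of_lt hKpos)),
        show p * θ = q by rw [hpdef, hqdef]; ring,
        Real.div_rpow hA0 (le_of_lt hKpos)]
    have e2 : K * t ^ θ = D := by
      have hKq : K / K ^ q = K ^ p := by
        rw [hpdef, show 1 / (1 + θ) = 1 - θ / (1 + θ) by field_simp; ring,
          Real.rpow_sub hKpos, Real.rpow_one, hqdef]
      rw [htθ, hDdef, ← hKq]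
      field_simp
    -- e3 : A ≤ D
    have e3 : A ≤ D := by
      have : A = A ^ q * A ^ p := by
        rw [← Real.rpow_add hApos]
        rw [hqdef, hpdef]
        rw [show θ / (1 + θ) + 1 / (1 + θ) = 1 by field_simp; ring]
        exact (Real.rpow_one A).symm
      rw [this, hDdef]
      exact mul_le_mul_of_nonneg_left
        (Real.rpow_le_rpow hA0 hAK (le_of_lt hppos)) (by positivity)
    -- bound B
    have hBD : B ≤ 2 * D + Real.sqrt n * D := by
      have h1 := hBle t htpos
      have h2 : Real.sqrt n * H * t ^ θ ≤ Real.sqrt n * K * t ^ θ := by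
        have hHK : H ≤ K := by linarith
        exact mul_le_mul_of_nonneg_right
          (mul_le_mul_of_nonneg_left hHK (Real.sqrt_nonneg _))
          (le_of_lt (Real.rpow_pos_of_pos htpos _))
      have h3 : 2 * A / t = 2 * D := by rw [mul_div_assoc, e1]
      have h4 : Real.sqrt n * K * t ^ θ = Real.sqrt n * D := by
        rw [mul_assoc, e2]
      linarith
    calc A + B ≤ D + (2 * D + Real.sqrt n * D) := by linarith
      _ = (3 + Real.sqrt n) * D := by ring
      _ = (3 + Real.sqrt n) * A ^ q * K ^ p := by rw [hDdef]; ring
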